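/- arXiv:1612.08326 — 2 statements merged into one kernel-verified Lean document; each statement's English description precedes it below -/
import Mathlib

section
/- Let L > 0, T > 0 and n ≥ 1. Over all μ_1, …, μ_n > 0 with Σ_{i=1}^n μ_i = T, the sum Σ_{i=1}^n μ_i·(e^{L/μ_i} − 1) is minimized at μ_1 = … = μ_n = T/n, with minimum value T·(e^{nL/T} − 1). Equivalently, when n real-time users fill the whole slot, the optimal per-user power is P_i = e^{nL/T} − 1 for every i. (This is the equal-power allocation of Theorem 1, equation (19), for the case where the Lambert policy does not fit in the slot.) -/
/-- equal time split minimizes total energy when `n` real-time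
users fill the slot, giving per-user power `e^{nL/T} − 1`. -/
theorem equal_split_minimizes_energy (L T : ℝ) (n : ℕ) (hL : 0 < L) (hT : 0 < T)
    (hn : 1 ≤ n) :
    (∀ μ : Fin n → ℝ, (∀ i, 0 < μ i) → ∑ i, μ i = T →
        T * (Real.exp ((n : ℝ) * L / T) - 1) ≤ ∑ i, μ i * (Real.exp (L / μ i) - 1)) ∧
      ∑ _i : Fin n, (T / (n : ℝ)) * (Real.exp (L / (T / (n : ℝ))) - 1)
        = T * (Real.exp ((n : ℝ) * L / T) - 1) := by
  have hnR : (0:ℝ) < (n:ℝ) := by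
    have : 0 < n := hn
    exact_mod_cast this
  set E := Real.exp ((n : ℝ) * L / T) with hE
  constructor
  · intro μ hpos hsum
    have key : ∀ i, E * (μ i + L - ((n:ℝ)*L/T) * μ i) ≤ μ i * Real.exp (L / μ i) := by
      intro i
      have hx := hpos i
      have h1 := Real.add_one_le_exp (L / μ i - (n:ℝ)*L/T)
      have h2 : Real.exp (L / μ i) = E * Real.exp (L / μ i - (n:ℝ)*L/T) := by
        rw [hE, ← Real.exp_add]; ring_nf
      have h3 : E * (L / μ i - (n:ℝ)*L/T + 1) ≤ Real.exp (L/μ i) := by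
        rw [h2]; exact mul_le_mul_of_nonneg_left h1 (Real.exp_pos _).le
      have h4 : μ i * (E * (L / μ i - (n:ℝ)*L/T + 1)) ≤ μ i * Real.exp (L/μ i) :=
        mul_le_mul_of_nonneg_left h3 hx.le
      have h6 : μ i * (E * (L / μ i - (n:ℝ)*L/T + 1)) = E * (μ i + L - ((n:ℝ)*L/T) * μ i) := by
        field_simp
        ring
      linarith [h6 ▸ h4]
    have hsum2 : ∑ i, E * (μ i + L - ((n:ℝ)*L/T) * μ i) ≤ ∑ i, μ i * Real.exp (L / μ i) :=
      Finset.sum_le_sum fun i _ => key i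
    have hleft : ∑ i, E * (μ i + L - ((n:ℝ)*L/T) * μ i) = T * E := by
      have h6 : ∑ i, (μ i + L - ((n:ℝ)*L/T) * μ i)
          = T + (n:ℝ)*L - ((n:ℝ)*L/T)*T := by
        rw [Finset.sum_sub_distrib, Finset.sum_add_distrib, ← Finset.mul_sum, hsum]
        simp [Finset.card_fin]
      rw [← Finset.mul_sum, h6]
      field_simp
      ring
    have hright : ∑ i, μ i * (Real.exp (L/μ i) - 1)
        = (∑ i, μ i * Real.exp (L/μ i)) - T := by
      rw [← hsum, ← Finset.sum_sub_distrib]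
      exact Finset.sum_congr rfl fun i _ => by ring
    rw [hright]
    have := hleft ▸ hsum2
    linarith
  · have hLn : L / (T / (n:ℝ)) = (n:ℝ) * L / T := by
      field_simp
    rw [hLn, Finset.sum_const, Finset.card_fin, nsmul_eq_mul]
    field_simp
    rfl
end

section
/- Let N ≥ 1, let Y : {1, …, N} → ℝ satisfy Y(1) ≥ Y(2) ≥ … ≥ Y(N), and let X > 0, T > 0, L > 0. For S ⊆ {1, …, N} define F(S) = Σ_{i∈S} Y(i) − X·T·(e^{|S|·L/T} − 1). Then the set S* = { i : Y(i) > X·T·(e^{i·L/T} − e^{(i−1)·L/T}) } is a prefix {1, …, n*} of the sorted order and maximizes F over all subsets S ⊆ {1, …, N}. (This is the scheduling rule of equation (24) in Theorem 2 for the case where only real-time users are scheduled.) -/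
/-- Objective when only real-time users are scheduled: reward minus the energy
`X·T·(e^{|S|L/T} − 1)` needed to serve `|S|` packets in the whole slot. -/
noncomputable def rtOnlyObj (X T L : ℝ) (Y : ℕ → ℝ) (S : Finset ℕ) : ℝ :=
  (∑ i ∈ S, Y i) - X * T * (Real.exp ((S.card : ℝ) * L / T) - 1)

/-- The threshold set `{ i : Y i > X·T·(e^{iL/T} − e^{(i−1)L/T}) }`. -/
noncomputable def rtOnlySet (N : ℕ) (X T L : ℝ) (Y : ℕ → ℝ) : Finset ℕ :=
  (Finset.Icc 1 N).filter
    (fun i => X * T * (Real.exp ((i : ℝ) * L / T) - Real.exp (((i : ℝ) - 1) * L / T)) < Y i)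

/-- The marginal cost of the `i`-th packet. -/
noncomputable def rtCost (X T L : ℝ) (i : ℕ) : ℝ :=
  X * T * (Real.exp ((i : ℝ) * L / T) - Real.exp (((i : ℝ) - 1) * L / T))

lemma rtCost_eq {T : ℝ} (hT : T ≠ 0) (X L : ℝ) (i : ℕ) :
    rtCost X T L i = X * T * Real.exp (((i : ℝ) - 1) * L / T) * (Real.exp (L / T) - 1) := by
  unfold rtCost
  have h : (i : ℝ) * L / T = ((i : ℝ) - 1) * L / T + L / T := by field_simp; ring
  rw [h, Real.exp_add]; ring

lemma rtCost_mono {X T L : ℝ} (hX : 0 < X) (hT : 0 < T) (hL : 0 < L) {i j : ℕ} (hij : i ≤ j) :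
    rtCost X T L i ≤ rtCost X T L j := by
  rw [rtCost_eq hT.ne' X L, rtCost_eq hT.ne' X L]
  have h1 : (0:ℝ) ≤ Real.exp (L / T) - 1 := by
    have : (0:ℝ) ≤ L / T := le_of_lt (div_pos hL hT)
    have := Real.one_le_exp this
    linarith
  have h2 : Real.exp (((i : ℝ) - 1) * L / T) ≤ Real.exp (((j : ℝ) - 1) * L / T) := by
    apply Real.exp_le_exp.mpr
    have hij' : (i : ℝ) ≤ (j : ℝ) := Nat.cast_le.mpr hij
    have h3 : (0:ℝ) < L := hL
    gcongr
  have hxt : (0:ℝ) ≤ X * T := le_of_lt (mul_pos hX hT)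
  exact mul_le_mul_of_nonneg_right (mul_le_mul_of_nonneg_left h2 hxt) h1

lemma rtEnergy_telescope (X T L : ℝ) (m : ℕ) :
    X * T * (Real.exp ((m : ℝ) * L / T) - 1) = ∑ i ∈ Finset.Icc 1 m, rtCost X T L i := by
  induction m with
  | zero => simp
  | succ m ih =>
    rw [Finset.sum_Icc_succ_top (by omega : 1 ≤ m + 1), ← ih]
    unfold rtCost
    push_cast
    have h : ((m : ℝ) + 1 - 1) = (m : ℝ) := by ring
    rw [h]
    ring

/-- sum over any subset of `{1,…,N}` is at most the sum over the prefix of the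
same cardinality, for `Y` descending. -/
lemma sum_le_prefix (N : ℕ) (Y : ℕ → ℝ)
    (hsorted : ∀ i j, i ∈ Finset.Icc 1 N → j ∈ Finset.Icc 1 N → i ≤ j → Y j ≤ Y i) :
    ∀ n (S : Finset ℕ), S.card = n → S ⊆ Finset.Icc 1 N →
      ∑ i ∈ S, Y i ≤ ∑ i ∈ Finset.Icc 1 n, Y i := by
  intro n
  induction n with
  | zero => intro S hc _; simp [Finset.card_eq_zero.mp hc]
  | succ n ih =>
    intro S hc hS
    have hne : S.Nonempty := Finset.card_pos.mp (by omega)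
    set M := S.max' hne with hMdef
    have hM : M ∈ S := S.max'_mem hne
    have hMN : M ∈ Finset.Icc 1 N := hS hM
    have hsubM : S ⊆ Finset.Icc 1 M := by
      intro j hj
      have h1 := hS hj
      simp only [Finset.mem_Icc] at h1 ⊢
      exact ⟨h1.1, S.le_max' j hj⟩
    have hcard : n + 1 ≤ M := by
      have := Finset.card_le_card hsubM
      rw [hc, Nat.card_Icc] at this
      omega
    have hMleN : M ≤ N := (Finset.mem_Icc.mp hMN).2
    have h1 : ∑ i ∈ S.erase M, Y i ≤ ∑ i ∈ Finset.Icc 1 n, Y i := by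
      apply ih
      · rw [Finset.card_erase_of_mem hM, hc]; omega
      · exact (Finset.erase_subset _ _).trans hS
    have h2 : Y M ≤ Y (n + 1) := by
      apply hsorted (n + 1) M ?_ hMN hcard
      simp only [Finset.mem_Icc]
      omega
    calc ∑ i ∈ S, Y i = ∑ i ∈ S.erase M, Y i + Y M := (Finset.sum_erase_add S Y hM).symm
      _ ≤ ∑ i ∈ Finset.Icc 1 n, Y i + Y (n + 1) := by linarith
      _ = ∑ i ∈ Finset.Icc 1 (n + 1), Y i :=
          (Finset.sum_Icc_succ_top (by omega : 1 ≤ n + 1) Y).symm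

/-- with users sorted by descending `Y`, the threshold set is a
prefix `{1, …, n*}` and maximizes the real-time-only objective. -/
theorem rt_only_threshold_optimal (N : ℕ) (hN : 1 ≤ N) (Y : ℕ → ℝ)
    (hsorted : ∀ i j, i ∈ Finset.Icc 1 N → j ∈ Finset.Icc 1 N → i ≤ j → Y j ≤ Y i)
    (X T L : ℝ) (hX : 0 < X) (hT : 0 < T) (hL : 0 < L) :
    (∃ nstar ≤ N, rtOnlySet N X T L Y = Finset.Icc 1 nstar) ∧
      ∀ S ⊆ Finset.Icc 1 N, rtOnlyObj X T L Y S ≤ rtOnlyObj X T L Y (rtOnlySet N X T L Y) := by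
  set Sstar := rtOnlySet N X T L Y with hSstar
  have hmem : ∀ i, i ∈ Sstar ↔ i ∈ Finset.Icc 1 N ∧ rtCost X T L i < Y i := by
    intro i
    simp [hSstar, rtOnlySet, rtCost]
  have hsub : Sstar ⊆ Finset.Icc 1 N := fun i hi => (hmem i |>.mp hi).1
  -- downward closed
  have hdc : ∀ i j, i ∈ Finset.Icc 1 N → i ≤ j → j ∈ Sstar → i ∈ Sstar := by
    intro i j hiN hij hj
    rw [hmem] at hj ⊢
    refine ⟨hiN, lt_of_le_of_lt (rtCost_mono hX hT hL hij) (lt_of_lt_of_le hj.2 ?_)⟩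
    exact hsorted i j hiN hj.1 hij
  set n := Sstar.card with hn
  have hnN : n ≤ N := by
    have := Finset.card_le_card hsub
    rwa [Nat.card_Icc, Nat.add_sub_cancel] at this
  -- prefix property
  have hpref : Sstar = Finset.Icc 1 n := by
    have hsub2 : Finset.Icc 1 n ⊆ Sstar := by
      intro i hi
      rw [Finset.mem_Icc] at hi
      by_contra hnot
      have hsubsmall : Sstar ⊆ Finset.Icc 1 (i - 1) := by
        intro j hj
        have hjN := hsub hj
        rw [Finset.mem_Icc] at hjN ⊢
        refine ⟨hjN.1, ?_⟩
        by_contra hle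
        have hij : i ≤ j := by omega
        exact hnot (hdc i j (Finset.mem_Icc.mpr ⟨hi.1, le_trans hi.2 hnN⟩) hij hj)
      have := Finset.card_le_card hsubsmall
      rw [← hn, Nat.card_Icc] at this
      omega
    refine (Finset.eq_of_subset_of_card_le hsub2 ?_).symm
    rw [Nat.card_Icc, Nat.add_sub_cancel]
  refine ⟨⟨n, hnN, hpref⟩, ?_⟩
  -- optimality
  intro S hS
  set m := S.card with hm
  have hmN : m ≤ N := by
    have := Finset.card_le_card hS
    rwa [Nat.card_Icc, Nat.add_sub_cancel] at this
  -- objective of a prefix as a sum of marginal gains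
  have hobj_prefix : ∀ k, rtOnlyObj X T L Y (Finset.Icc 1 k)
      = ∑ i ∈ Finset.Icc 1 k, (Y i - rtCost X T L i) := by
    intro k
    rw [rtOnlyObj, Nat.card_Icc, Nat.add_sub_cancel, rtEnergy_telescope,
      Finset.sum_sub_distrib]
  have hstep1 : rtOnlyObj X T L Y S ≤ rtOnlyObj X T L Y (Finset.Icc 1 m) := by
    rw [rtOnlyObj, rtOnlyObj, Nat.card_Icc, Nat.add_sub_cancel, ← hm]
    have := sum_le_prefix N Y hsorted m S hm.symm hS
    linarith
  have hstep2 : rtOnlyObj X T L Y (Finset.Icc 1 m) ≤ rtOnlyObj X T L Y (Finset.Icc 1 n) := by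
    rw [hobj_prefix, hobj_prefix]
    have hIcc : ∀ k, Finset.Icc 1 k = Finset.Ioc 0 k := fun k => by
      rw [← Finset.Icc_add_one_left_eq_Ioc]; rfl
    rcases le_or_gt m n with hmn | hnm
    · have hsplit : ∑ i ∈ Finset.Icc 1 n, (Y i - rtCost X T L i)
          = ∑ i ∈ Finset.Icc 1 m, (Y i - rtCost X T L i)
            + ∑ i ∈ Finset.Ioc m n, (Y i - rtCost X T L i) := by
        rw [hIcc n, hIcc m, Finset.sum_Ioc_consecutive _ (Nat.zero_le m) hmn]
      rw [hsplit]
      have hpos : 0 ≤ ∑ i ∈ Finset.Ioc m n, (Y i - rtCost X T L i) := by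
        apply Finset.sum_nonneg
        intro i hi
        rw [Finset.mem_Ioc] at hi
        have : i ∈ Sstar := by
          rw [hpref, Finset.mem_Icc]; omega
        have := (hmem i).mp this
        linarith [this.2]
      linarith
    · have hsplit : ∑ i ∈ Finset.Icc 1 m, (Y i - rtCost X T L i)
          = ∑ i ∈ Finset.Icc 1 n, (Y i - rtCost X T L i)
            + ∑ i ∈ Finset.Ioc n m, (Y i - rtCost X T L i) := by
        rw [hIcc n, hIcc m, Finset.sum_Ioc_consecutive _ (Nat.zero_le n) (le_of_lt hnm)]
      rw [hsplit]
      have hneg : ∑ i ∈ Finset.Ioc n m, (Y i - rtCost X T L i) ≤ 0 := by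
        apply Finset.sum_nonpos
        intro i hi
        rw [Finset.mem_Ioc] at hi
        have hiN : i ∈ Finset.Icc 1 N := Finset.mem_Icc.mpr ⟨by omega, le_trans hi.2 hmN⟩
        have hni : i ∉ Sstar := by
          rw [hpref, Finset.mem_Icc]; omega
        rw [hmem] at hni
        push_neg at hni
        have := hni hiN
        linarith
      linarith
  rw [hSstar] at hpref ⊢
  rw [hpref]
  exact le_trans hstep1 hstep2
end
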